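/- Let G = (V, E) be a finite simple graph, let y be an LP-optimal point of the vertex-cover LP of G with y_v ∈ {0,1} for all v ∈ V, and let x' be an LP-optimal half-integral point with x'_v = 1 for a given vertex v. Then there exists an LP-optimal point z with z_u ∈ {0,1} for all u ∈ V and z_v = 1. -/

import Mathlib

def LPFeasible {V : Type*} [Fintype V] (G : SimpleGraph V) (x : V → ℝ) : Prop :=
  (∀ v, 0 ≤ x v ∧ x v ≤ 1) ∧ ∀ u v, G.Adj u v → 1 ≤ x u + x v

noncomputable def LPValue {V : Type*} [Fintype V] (x : V → ℝ) : ℝ := ∑ v, x v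

def LPOptimal {V : Type*} [Fintype V] (G : SimpleGraph V) (x : V → ℝ) : Prop :=
  LPFeasible G x ∧ ∀ y : V → ℝ, LPFeasible G y → LPValue x ≤ LPValue y

def HalfIntegral {V : Type*} (x : V → ℝ) : Prop :=
  ∀ v, x v = 0 ∨ x v = 1/2 ∨ x v = 1

def IsVertexCover {V : Type*} [Fintype V] (G : SimpleGraph V) (C : Finset V) : Prop :=
  ∀ u v, G.Adj u v → u ∈ C ∨ v ∈ C

/-- If there is an integral LP-optimal point and an LP-optimal half-integral point with
x'_v = 1, then there is an integral LP-optimal point with z_v = 1. -/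
theorem integral_opt_with_v_one {V : Type*} [Fintype V] (G : SimpleGraph V)
    (y x' : V → ℝ) (v : V)
    (hy : LPOptimal G y) (hyint : ∀ u, y u = 0 ∨ y u = 1)
    (hx : LPOptimal G x') (hxh : HalfIntegral x') (hxv : x' v = 1) :
    ∃ z : V → ℝ, LPOptimal G z ∧ (∀ u, z u = 0 ∨ z u = 1) ∧ z v = 1 := by
  classical
  obtain ⟨hyF, hyopt⟩ := hy
  obtain ⟨hxF, hxopt⟩ := hx
  set z : V → ℝ := fun u => if x' u = 1 then 1 else if x' u = 0 then 0 else y u with hzdef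
  set p : V → ℝ := fun u =>
    if x' u = 1 ∧ y u = 0 then (1:ℝ)/2 else if x' u = 0 ∧ y u = 1 then (1:ℝ)/2 else x' u
    with hpdef
  have key : ∀ u, z u = y u + 2 * (x' u - p u) := by
    intro u
    rcases hxh u with h | h | h <;> rcases hyint u with h2 | h2 <;>
      simp [hzdef, hpdef, h, h2] <;> norm_num
  have hpfeas : LPFeasible G p := by
    constructor
    · intro u
      rcases hxh u with h | h | h <;> rcases hyint u with h2 | h2 <;>
        simp [hpdef, h, h2] <;> norm_num
    · intro u w hadj
      have e1 := hxF.2 u w hadj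
      have e2 := hyF.2 u w hadj
      rcases hxh u with h | h | h <;> rcases hxh w with g | g | g <;>
        rcases hyint u with h2 | h2 <;> rcases hyint w with g2 | g2 <;>
        simp only [hpdef, h, g, h2, g2] at e1 e2 ⊢ <;> (revert e1 e2; norm_num)
  have hzfeas : LPFeasible G z := by
    constructor
    · intro u
      rcases hxh u with h | h | h <;> rcases hyint u with h2 | h2 <;>
        simp [hzdef, h, h2] <;> norm_num
    · intro u w hadj
      have e1 := hxF.2 u w hadj
      have e2 := hyF.2 u w hadj
      rcases hxh u with h | h | h <;> rcases hxh w with g | g | g <;>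
        rcases hyint u with h2 | h2 <;> rcases hyint w with g2 | g2 <;>
        simp only [hzdef, h, g, h2, g2] at e1 e2 ⊢ <;> (revert e1 e2; norm_num)
  have hps : LPValue x' ≤ LPValue p := hxopt p hpfeas
  have hval : LPValue z = LPValue y + 2 * (LPValue x' - LPValue p) := by
    simp only [LPValue]
    rw [Finset.sum_congr rfl (fun u _ => key u), Finset.sum_add_distrib,
      ← Finset.sum_sub_distrib, Finset.mul_sum]
  have hzy : LPValue z ≤ LPValue y := by
    have : LPValue x' - LPValue p ≤ 0 := by linarith
    nlinarith [hval]
  refine ⟨z, ⟨hzfeas, fun q hq => le_trans ?_ (hyopt q hq)⟩, ?_, ?_⟩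
  · exact hzy
  · intro u
    rcases hxh u with h | h | h <;> rcases hyint u with h2 | h2 <;> simp [hzdef, h, h2]
  · simp [hzdef, hxv]
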